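/- Let F₁, F₂ : ℝⁿ → ℝ be differentiable, let R : ℝⁿ → ℝ be convex, and set G₁ = F₁ + R, G₂ = F₂ + R. Fix β > 0 and define, for a differentiable F and δ > 0, D_R(F; x, δ) := −2δ · inf_y { ⟨∇F(x), y − x⟩ + (δ/2)‖y − x‖² + R(y) − R(x) }. Suppose: G₂ attains its infimum G₂* = inf G₂ and satisfies the proximal PL condition with constant μ > 0 at parameter β, i.e., (1/2) D_R(F₂; x, β) ≥ μ(G₂(x) − G₂*) for all x; G₁ attains its infimum G₁* at some point x₁* ∈ ℝⁿ; |G₂(x) − G₁(x)| ≤ Kη for all x (K, η > 0); and ‖∇F₂(x) − ∇F₁(x)‖ ≤ J for all x (J ≥ 0). Then G₁* − G₂* ≤ Kη + J²/(2μ). -/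

import Mathlib

open MeasureTheory
open scoped RealInnerProductSpace BigOperators

/-- The forward-backward envelope quantity
`D_R(F; x, δ) = -2δ · inf_y { ⟪∇F(x), y - x⟫ + (δ/2)‖y - x‖² + R(y) - R(x) }`
used in the proximal Polyak–Łojasiewicz condition. -/
noncomputable def DR {n : ℕ} (F R : EuclideanSpace ℝ (Fin n) → ℝ)
    (x : EuclideanSpace ℝ (Fin n)) (δ : ℝ) : ℝ :=
  -2 * δ * (⨅ y : EuclideanSpace ℝ (Fin n),
    (⟪gradient F x, y - x⟫ + δ / 2 * ‖y - x‖ ^ 2 + R y - R x))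

/-- **Difference of successive optimal values under the proximal PL condition.**
With `G₁ = F₁ + R`, `G₂ = F₂ + R` (`R` convex), if `G₂` attains its infimum `G2s`
and satisfies the proximal PL condition with constant `μ > 0` at parameter `β`,
`G₁` attains its infimum `G1s` at `x1star`, `|G₂ - G₁| ≤ K η` pointwise and
`‖∇F₂ - ∇F₁‖ ≤ J` pointwise, then `G1s - G2s ≤ K η + J²/(2μ)`. -/
theorem stmt10 {n : ℕ} (β μ K η J : ℝ)
    (hβ : 0 < β) (hμ : 0 < μ) (hK : 0 < K) (hη : 0 < η) (hJ : 0 ≤ J)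
    (F₁ F₂ R : EuclideanSpace ℝ (Fin n) → ℝ)
    (hF₁ : Differentiable ℝ F₁) (hF₂ : Differentiable ℝ F₂)
    (hR : ConvexOn ℝ Set.univ R)
    (G2s : ℝ) (hG2_lb : ∀ x, G2s ≤ F₂ x + R x) (hG2_att : ∃ x, F₂ x + R x = G2s)
    (hproxPL : ∀ x, μ * ((F₂ x + R x) - G2s) ≤ (1 / 2) * DR F₂ R x β)
    (G1s : ℝ) (x1star : EuclideanSpace ℝ (Fin n))
    (hG1_att : F₁ x1star + R x1star = G1s) (hG1_lb : ∀ x, G1s ≤ F₁ x + R x)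
    (hclose : ∀ x, |(F₂ x + R x) - (F₁ x + R x)| ≤ K * η)
    (hgrad : ∀ x, ‖gradient F₂ x - gradient F₁ x‖ ≤ J) :
    G1s - G2s ≤ K * η + J ^ 2 / (2 * μ) := by
  set x := x1star
  -- first-order optimality at x1star
  have hfo : ∀ y : EuclideanSpace ℝ (Fin n),
      0 ≤ ⟪gradient F₁ x, y - x⟫ + R y - R x := by
    intro y
    set d := y - x with hd
    -- derivative of t ↦ F₁ (x + t • d) at 0
    have hline : HasDerivAt (fun t : ℝ => x + t • d) d 0 := by
      simpa using ((hasDerivAt_id (0:ℝ)).smul_const d).const_add x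
    have hF : HasFDerivAt F₁ (InnerProductSpace.toDual ℝ _ (gradient F₁ x)) x :=
      (hF₁ x).hasGradientAt.hasFDerivAt
    have hcomp : HasDerivAt (fun t : ℝ => F₁ (x + t • d)) ⟪gradient F₁ x, d⟫ 0 := by
      have hF' : HasFDerivAt F₁ (InnerProductSpace.toDual ℝ _ (gradient F₁ x))
          ((fun t : ℝ => x + t • d) 0) := by simpa using hF
      have := HasFDerivAt.comp_hasDerivAt (0:ℝ) hF' hline
      simpa [Function.comp_def, InnerProductSpace.toDual_apply_apply] using this
    -- slope bound for t ∈ (0, 1)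
    have hslope : ∀ t : ℝ, t ∈ Set.Ioo (0:ℝ) 1 →
        -(R y - R x) ≤ (F₁ (x + t • d) - F₁ (x + (0:ℝ) • d)) / (t - 0) := by
      intro t ht
      have ht0 : 0 < t := ht.1
      have hconv : R (x + t • d) ≤ (1 - t) * R x + t * R y := by
        have : x + t • d = (1 - t) • x + t • y := by
          simp [hd, smul_sub, sub_smul]; module
        rw [this]
        exact hR.2 (Set.mem_univ x) (Set.mem_univ y) (by linarith [ht.2]) (le_of_lt ht0)
          (by ring)
      have hmin : G1s ≤ F₁ (x + t • d) + R (x + t • d) := hG1_lb _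
      rw [← hG1_att] at hmin
      rw [sub_zero, le_div_iff₀ ht0]
      simp only [zero_smul, add_zero]
      nlinarith
    -- pass to the limit
    have hlim : Filter.Tendsto (fun t : ℝ => (F₁ (x + t • d) - F₁ (x + (0:ℝ) • d)) / (t - 0))
        (nhdsWithin 0 (Set.Ioi (0:ℝ))) (nhds ⟪gradient F₁ x, d⟫) := by
      have h := hcomp.hasDerivWithinAt (s := Set.Ioi (0:ℝ))
      have h2 := (hasDerivWithinAt_iff_tendsto_slope.mp h)
      have hsub : nhdsWithin (0:ℝ) (Set.Ioi 0) ≤ nhdsWithin 0 (Set.Ioi 0 \ {0}) := by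
        apply nhdsWithin_mono
        intro t ht
        exact ⟨ht, by simp [(Set.mem_Ioi.mp ht).ne']⟩
      refine (h2.mono_left hsub).congr ?_
      intro t
      simp [slope_def_field]
    have key : -(R y - R x) ≤ ⟪gradient F₁ x, d⟫ := by
      refine ge_of_tendsto hlim ?_
      filter_upwards [Ioo_mem_nhdsGT (by norm_num : (0:ℝ) < 1)]
        with t ht using hslope t ht
    linarith
  -- lower bound on each term of the infimum
  have hterm : ∀ y : EuclideanSpace ℝ (Fin n),
      -(J ^ 2 / (2 * β)) ≤ ⟪gradient F₂ x, y - x⟫ + β / 2 * ‖y - x‖ ^ 2 + R y - R x := by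
    intro y
    have h1 := hfo y
    have h2 : ⟪gradient F₂ x - gradient F₁ x, y - x⟫ ≥ -(J * ‖y - x‖) := by
      have := abs_real_inner_le_norm (gradient F₂ x - gradient F₁ x) (y - x)
      have hb : ‖gradient F₂ x - gradient F₁ x‖ * ‖y - x‖ ≤ J * ‖y - x‖ :=
        mul_le_mul_of_nonneg_right (hgrad x) (norm_nonneg _)
      have := neg_abs_le ⟪gradient F₂ x - gradient F₁ x, y - x⟫
      nlinarith [abs_real_inner_le_norm (gradient F₂ x - gradient F₁ x) (y - x)]
    have h3 : ⟪gradient F₂ x, y - x⟫ =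
        ⟪gradient F₂ x - gradient F₁ x, y - x⟫ + ⟪gradient F₁ x, y - x⟫ := by
      rw [← inner_add_left]; simp
    have h4 : -(J ^ 2 / (2 * β)) ≤ -(J * ‖y - x‖) + β / 2 * ‖y - x‖ ^ 2 := by
      have hn : 0 ≤ ‖y - x‖ := norm_nonneg _
      have hkey : 0 ≤ β / 2 * (‖y - x‖ - J / β) ^ 2 := by positivity
      have hβ' : β ≠ 0 := ne_of_gt hβ
      have hexp : β / 2 * (‖y - x‖ - J / β) ^ 2
          = β / 2 * ‖y - x‖ ^ 2 - J * ‖y - x‖ + J ^ 2 / (2 * β) := by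
        field_simp; ring
      rw [hexp] at hkey
      linarith
    rw [h3]; linarith
  -- bound the infimum from below, hence DR from above
  have hinf : -(J ^ 2 / (2 * β)) ≤ ⨅ y : EuclideanSpace ℝ (Fin n),
      (⟪gradient F₂ x, y - x⟫ + β / 2 * ‖y - x‖ ^ 2 + R y - R x) :=
    le_ciInf hterm
  have hDR : DR F₂ R x β ≤ J ^ 2 := by
    unfold DR
    have h := mul_le_mul_of_nonpos_left hinf (by linarith : -2 * β ≤ 0)
    calc -2 * β * (⨅ y : EuclideanSpace ℝ (Fin n),
          (⟪gradient F₂ x, y - x⟫ + β / 2 * ‖y - x‖ ^ 2 + R y - R x))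
        ≤ -2 * β * -(J ^ 2 / (2 * β)) := h
      _ = J ^ 2 := by field_simp
  -- combine
  have hPL := hproxPL x
  have h5 : μ * ((F₂ x + R x) - G2s) ≤ J ^ 2 / 2 := by
    calc μ * ((F₂ x + R x) - G2s) ≤ (1 / 2) * DR F₂ R x β := hPL
      _ ≤ (1 / 2) * J ^ 2 := by linarith
      _ = J ^ 2 / 2 := by ring
  have h6 : (F₂ x + R x) - G2s ≤ J ^ 2 / (2 * μ) := by
    rw [le_div_iff₀ (by positivity)]
    nlinarith
  have h7 := hclose x
  have h8 : F₁ x + R x = G1s := hG1_att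
  have := abs_le.mp h7
  linarith [this.1, this.2]
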